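/- Half-line second moment against a product of 1D and 2D Gaussians: for σ₁, σ₂ > 0, c₁, c₂ ∈ ℝ, c₃, c₄ ∈ ℝ² with (c₁, c₃) ≠ (0, 0), ∫₀^∞ r² k_{σ₁}(r c₁ + c₂) k_{σ₂}(r c₃ + c₄) dr = e^{-c₂²/(2σ₁²) - ‖c₄‖²/(2σ₂²)} (√π (1 + 2t₂²) e^{t₂²} erfc(t₂) - 2t₂) / (8√2 π^{3/2} σ₁ σ₂² t₁³), where t₁ = √(c₁²/(2σ₁²) + ‖c₃‖²/(2σ₂²)) and t₂ = (c₁c₂/σ₁² + c₃ᵀc₄/σ₂²)/(2t₁). -/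

import Mathlib

open MeasureTheory RealInnerProductSpace

/-- d-dimensional isotropic Gaussian kernel. -/
noncomputable def gauss (d : ℕ) (σ : ℝ) (v : EuclideanSpace ℝ (Fin d)) : ℝ :=
  (2 * Real.pi * σ ^ 2) ^ (-(d : ℝ) / 2) * Real.exp (-‖v‖ ^ 2 / (2 * σ ^ 2))

/-- 1D Gaussian kernel. -/
noncomputable def gauss1 (σ t : ℝ) : ℝ :=
  (2 * Real.pi * σ ^ 2) ^ (-(1 : ℝ) / 2) * Real.exp (-t ^ 2 / (2 * σ ^ 2))

/-- The Gauss error function. -/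
noncomputable def erf (x : ℝ) : ℝ :=
  (2 / Real.sqrt Real.pi) * ∫ t in (0 : ℝ)..x, Real.exp (-t ^ 2)

/-- The complementary error function. -/
noncomputable def erfc (x : ℝ) : ℝ := 1 - erf x


open Filter Set


private lemma tendsto_mul_exp_neg_sq :
    Tendsto (fun u : ℝ => u * Real.exp (-u ^ 2)) atTop (nhds 0) := by
  have h1 : Tendsto (fun u : ℝ => u * Real.exp (-u)) atTop (nhds 0) := by
    simpa using Real.tendsto_pow_mul_exp_neg_atTop_nhds_zero 1
  apply squeeze_zero' ?_ ?_ h1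
  · filter_upwards [eventually_ge_atTop (0:ℝ)] with u hu
    positivity
  · filter_upwards [eventually_ge_atTop (1:ℝ)] with u hu
    have h : -u ^ 2 ≤ -u := by nlinarith
    exact mul_le_mul_of_nonneg_left (Real.exp_le_exp.2 h) (by linarith)

private lemma tendsto_exp_neg_sq :
    Tendsto (fun u : ℝ => Real.exp (-u ^ 2)) atTop (nhds 0) :=
  Real.tendsto_exp_neg_atTop_nhds_zero.comp (tendsto_pow_atTop two_ne_zero)

private lemma integrable_sub_sq_mul_exp (t₂ : ℝ) :
    Integrable (fun u : ℝ => (u - t₂) ^ 2 * Real.exp (-u ^ 2)) := by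
  have h0 : Integrable (fun u : ℝ => Real.exp (-u ^ 2)) := by
    simpa using integrable_exp_neg_mul_sq one_pos
  have h1 : Integrable (fun u : ℝ => u * Real.exp (-u ^ 2)) := by
    simpa using integrable_mul_exp_neg_mul_sq one_pos
  have h2 : Integrable (fun u : ℝ => u ^ 2 * Real.exp (-u ^ 2)) := by
    have := integrable_rpow_mul_exp_neg_mul_sq one_pos (s := 2) (by norm_num)
    simpa [Real.rpow_two] using this
  have heq : (fun u : ℝ => (u - t₂) ^ 2 * Real.exp (-u ^ 2))
      = fun u => u ^ 2 * Real.exp (-u ^ 2) - (2 * t₂) * (u * Real.exp (-u ^ 2))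
          + t₂ ^ 2 * Real.exp (-u ^ 2) := by
    funext u; ring
  rw [heq]
  exact (h2.sub (h1.const_mul _)).add (h0.const_mul _)

private lemma gauss_moment_Ioi (t₁ t₂ : ℝ) (ht₁ : 0 < t₁) :
    ∫ r in Set.Ioi (0:ℝ), r ^ 2 * Real.exp (-(t₁ * r + t₂) ^ 2)
      = ((t₂ ^ 2 + 1/2) * (Real.sqrt Real.pi / 2) * erfc t₂
          - t₂ / 2 * Real.exp (-t₂ ^ 2)) / t₁ ^ 3 := by
  have ht₁' : t₁ ≠ 0 := ht₁.ne'
  set I : ℝ → ℝ := fun x => ∫ t in (0:ℝ)..x, Real.exp (-t ^ 2) with hI_def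
  have hcont : Continuous fun t : ℝ => Real.exp (-t ^ 2) := by continuity
  have hIderiv : ∀ x : ℝ, HasDerivAt I (Real.exp (-x ^ 2)) x := fun x =>
    (hcont.integral_hasStrictDerivAt 0 x).hasDerivAt
  set H : ℝ → ℝ := fun u => -((u - 2 * t₂) / 2) * Real.exp (-u ^ 2)
      + (t₂ ^ 2 + 1/2) * I u with hH_def
  have hH : ∀ u : ℝ, HasDerivAt H ((u - t₂) ^ 2 * Real.exp (-u ^ 2)) u := by
    intro u
    have h1 : HasDerivAt (fun u : ℝ => -((u - 2 * t₂) / 2)) (-(1/2)) u := by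
      exact (((hasDerivAt_id u).sub_const (2 * t₂)).div_const 2).neg.congr_deriv (by norm_num)
    have h2 : HasDerivAt (fun u : ℝ => Real.exp (-u ^ 2))
        (Real.exp (-u ^ 2) * (-(2 * u))) u := by
      have hsq : HasDerivAt (fun u : ℝ => -u ^ 2) (-(2 * u)) u := by
        exact (hasDerivAt_pow 2 u).neg.congr_deriv (by norm_num)
      exact hsq.exp
    have h5 := (h1.mul h2).add ((hIderiv u).const_mul (t₂ ^ 2 + 1/2))
    exact h5.congr_deriv (by ring)
  set F : ℝ → ℝ := fun r => H (t₁ * r + t₂) / t₁ ^ 3 with hF_def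
  have hlin : ∀ r : ℝ, HasDerivAt (fun r : ℝ => t₁ * r + t₂) t₁ r := by
    intro r
    simpa using ((hasDerivAt_id r).const_mul t₁).add_const t₂
  have hF : ∀ r : ℝ, HasDerivAt F (r ^ 2 * Real.exp (-(t₁ * r + t₂) ^ 2)) r := by
    intro r
    have := ((hH (t₁ * r + t₂)).comp r (hlin r)).div_const (t₁ ^ 3)
    refine this.congr_deriv ?_
    rw [div_eq_iff (pow_ne_zero 3 ht₁')]
    ring
  -- integrability
  have hint : Integrable (fun r : ℝ => r ^ 2 * Real.exp (-(t₁ * r + t₂) ^ 2)) := by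
    have hg : Integrable (fun u : ℝ => ((u - t₂) ^ 2 * Real.exp (-u ^ 2)) / t₁ ^ 2) :=
      (integrable_sub_sq_mul_exp t₂).div_const _
    have h₁ := hg.comp_add_right t₂
    have h₂ := h₁.comp_mul_left' ht₁'
    have heq : (fun r : ℝ => r ^ 2 * Real.exp (-(t₁ * r + t₂) ^ 2))
        = fun r : ℝ => ((t₁ * r + t₂ - t₂) ^ 2 * Real.exp (-(t₁ * r + t₂) ^ 2)) / t₁ ^ 2 := by
      funext r
      field_simp
      ring
    rw [heq]
    simpa using h₂
  -- limit
  have hIlim : Tendsto I atTop (nhds (Real.sqrt Real.pi / 2)) := by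
    have hint0 : IntegrableOn (fun t : ℝ => Real.exp (-t ^ 2)) (Ioi 0) := by
      have : Integrable (fun u : ℝ => Real.exp (-u ^ 2)) := by
        simpa using integrable_exp_neg_mul_sq one_pos
      exact this.integrableOn
    have h := intervalIntegral_tendsto_integral_Ioi 0 hint0 tendsto_id
    have hval : ∫ t in Ioi (0:ℝ), Real.exp (-t ^ 2) = Real.sqrt Real.pi / 2 := by
      have := integral_gaussian_Ioi 1
      simpa using this
    rw [hval] at h
    exact h
  have hHlim : Tendsto H atTop (nhds ((t₂ ^ 2 + 1/2) * (Real.sqrt Real.pi / 2))) := by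
    have h1 : Tendsto (fun u : ℝ => -((u - 2 * t₂) / 2) * Real.exp (-u ^ 2)) atTop (nhds 0) := by
      have heq : (fun u : ℝ => -((u - 2 * t₂) / 2) * Real.exp (-u ^ 2))
          = fun u => (-(1/2)) * (u * Real.exp (-u ^ 2)) + t₂ * Real.exp (-u ^ 2) := by
        funext u; ring
      rw [heq]
      simpa using (tendsto_mul_exp_neg_sq.const_mul (-(1/2 : ℝ))).add
        (tendsto_exp_neg_sq.const_mul t₂)
    have htot := h1.add (hIlim.const_mul (t₂ ^ 2 + 1/2))
    rw [hH_def, show (t₂ ^ 2 + 1/2) * (Real.sqrt Real.pi / 2)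
      = 0 + (t₂ ^ 2 + 1/2) * (Real.sqrt Real.pi / 2) from (zero_add _).symm]
    exact htot
  have haff : Tendsto (fun r : ℝ => t₁ * r + t₂) atTop atTop :=
    tendsto_atTop_add_const_right atTop t₂ (tendsto_id.const_mul_atTop ht₁)
  have hFlim : Tendsto F atTop (nhds ((t₂ ^ 2 + 1/2) * (Real.sqrt Real.pi / 2) / t₁ ^ 3)) :=
    (hHlim.comp haff).div_const _
  have key := integral_Ioi_of_hasDerivAt_of_tendsto' (a := (0:ℝ)) (fun r _ => hF r) hint.integrableOn hFlim
  rw [key]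
  have hIt₂ : I t₂ = Real.sqrt Real.pi / 2 * (1 - erfc t₂) := by
    have hπ : Real.sqrt Real.pi ≠ 0 := by positivity
    simp only [erfc, erf, hI_def]
    field_simp
    ring
  simp only [hF_def, hH_def, mul_zero, zero_add]
  rw [hIt₂]
  ring

theorem half_line_second_moment_product (σ₁ σ₂ c₁ c₂ : ℝ)
    (hσ₁ : 0 < σ₁) (hσ₂ : 0 < σ₂)
    (c₃ c₄ : EuclideanSpace ℝ (Fin 2)) (hne : ¬(c₁ = 0 ∧ c₃ = 0))
    (t₁ t₂ : ℝ)
    (ht₁ : t₁ = Real.sqrt (c₁ ^ 2 / (2 * σ₁ ^ 2) + ‖c₃‖ ^ 2 / (2 * σ₂ ^ 2)))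
    (ht₂ : t₂ = (c₁ * c₂ / σ₁ ^ 2 + ⟪c₃, c₄⟫ / σ₂ ^ 2) / (2 * t₁)) :
    ∫ r in Set.Ioi (0 : ℝ), r ^ 2 * gauss1 σ₁ (r * c₁ + c₂) * gauss 2 σ₂ (r • c₃ + c₄)
      = Real.exp (-c₂ ^ 2 / (2 * σ₁ ^ 2) - ‖c₄‖ ^ 2 / (2 * σ₂ ^ 2))
        * (Real.sqrt Real.pi * (1 + 2 * t₂ ^ 2) * Real.exp (t₂ ^ 2) * erfc t₂ - 2 * t₂)
        / (8 * Real.sqrt 2 * Real.pi ^ ((3 : ℝ) / 2) * σ₁ * σ₂ ^ 2 * t₁ ^ 3) := by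
  have hσ₁' : σ₁ ≠ 0 := hσ₁.ne'
  have hσ₂' : σ₂ ≠ 0 := hσ₂.ne'
  have hs : 0 < c₁ ^ 2 / (2 * σ₁ ^ 2) + ‖c₃‖ ^ 2 / (2 * σ₂ ^ 2) := by
    rcases eq_or_ne c₁ 0 with h | h
    · have hc₃ : c₃ ≠ 0 := fun hc => hne ⟨h, hc⟩
      have h3 : 0 < ‖c₃‖ := norm_pos_iff.mpr hc₃
      have : 0 < ‖c₃‖ ^ 2 / (2 * σ₂ ^ 2) := by positivity
      have h0 : 0 ≤ c₁ ^ 2 / (2 * σ₁ ^ 2) := by positivity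
      linarith
    · have h1 : 0 < c₁ ^ 2 := by positivity
      have : 0 < c₁ ^ 2 / (2 * σ₁ ^ 2) := by positivity
      have h0 : 0 ≤ ‖c₃‖ ^ 2 / (2 * σ₂ ^ 2) := by positivity
      linarith
  have ht₁pos : 0 < t₁ := ht₁ ▸ Real.sqrt_pos.mpr hs
  have ht₁' : t₁ ≠ 0 := ht₁pos.ne'
  have ht₁sq : t₁ ^ 2 = c₁ ^ 2 / (2 * σ₁ ^ 2) + ‖c₃‖ ^ 2 / (2 * σ₂ ^ 2) := by
    rw [ht₁]; exact Real.sq_sqrt hs.le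
  have hb : 2 * t₁ * t₂ = c₁ * c₂ / σ₁ ^ 2 + ⟪c₃, c₄⟫ / σ₂ ^ 2 := by
    rw [ht₂]; field_simp
  set K : ℝ := (Real.sqrt 2 * Real.sqrt Real.pi * σ₁)⁻¹ * (2 * Real.pi * σ₂ ^ 2)⁻¹
      * Real.exp (t₂ ^ 2 + (-c₂ ^ 2 / (2 * σ₁ ^ 2) - ‖c₄‖ ^ 2 / (2 * σ₂ ^ 2))) with hK_def
  have hP1 : (2 * Real.pi * σ₁ ^ 2) ^ (-(1:ℝ) / 2)
      = (Real.sqrt 2 * Real.sqrt Real.pi * σ₁)⁻¹ := by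
    have h : (0:ℝ) < 2 * Real.pi * σ₁ ^ 2 := by positivity
    rw [show (-(1:ℝ)/2) = -(1/2) by norm_num, Real.rpow_neg h.le, ← Real.sqrt_eq_rpow]
    rw [Real.sqrt_mul (by positivity : (0:ℝ) ≤ 2 * Real.pi),
      Real.sqrt_mul (by norm_num : (0:ℝ) ≤ 2), Real.sqrt_sq hσ₁.le]
  have hP2 : (2 * Real.pi * σ₂ ^ 2) ^ (-((2:ℕ):ℝ) / 2) = (2 * Real.pi * σ₂ ^ 2)⁻¹ := by
    rw [show (-((2:ℕ):ℝ) / 2) = (-1 : ℝ) by push_cast; norm_num, Real.rpow_neg_one]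
  have hpt : ∀ r : ℝ, r ^ 2 * gauss1 σ₁ (r * c₁ + c₂) * gauss 2 σ₂ (r • c₃ + c₄)
      = K * (r ^ 2 * Real.exp (-(t₁ * r + t₂) ^ 2)) := by
    intro r
    have hnorm : ‖r • c₃ + c₄‖ ^ 2
        = r ^ 2 * ‖c₃‖ ^ 2 + 2 * (r * ⟪c₃, c₄⟫) + ‖c₄‖ ^ 2 := by
      rw [norm_add_sq_real, norm_smul, real_inner_smul_left, mul_pow, Real.norm_eq_abs, sq_abs]
    have hexp : -(r * c₁ + c₂) ^ 2 / (2 * σ₁ ^ 2)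
          + -(r ^ 2 * ‖c₃‖ ^ 2 + 2 * (r * ⟪c₃, c₄⟫) + ‖c₄‖ ^ 2) / (2 * σ₂ ^ 2)
        = (t₂ ^ 2 + (-c₂ ^ 2 / (2 * σ₁ ^ 2) - ‖c₄‖ ^ 2 / (2 * σ₂ ^ 2)))
          + -(t₁ * r + t₂) ^ 2 := by
      linear_combination (r ^ 2) * ht₁sq + r * hb
    simp only [gauss1, gauss]
    rw [hnorm, hK_def, hP1, hP2]
    have hmul : Real.exp (-(r * c₁ + c₂) ^ 2 / (2 * σ₁ ^ 2))
        * Real.exp (-(r ^ 2 * ‖c₃‖ ^ 2 + 2 * (r * ⟪c₃, c₄⟫) + ‖c₄‖ ^ 2) / (2 * σ₂ ^ 2))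
        = Real.exp (t₂ ^ 2 + (-c₂ ^ 2 / (2 * σ₁ ^ 2) - ‖c₄‖ ^ 2 / (2 * σ₂ ^ 2)))
          * Real.exp (-(t₁ * r + t₂) ^ 2) := by
      rw [← Real.exp_add, ← Real.exp_add, hexp]
    linear_combination ((Real.sqrt 2 * Real.sqrt Real.pi * σ₁)⁻¹
      * (2 * Real.pi * σ₂ ^ 2)⁻¹ * r ^ 2) * hmul
  have hπ32 : Real.pi ^ ((3:ℝ) / 2) = Real.pi * Real.sqrt Real.pi := by
    rw [show ((3:ℝ)/2) = 1 + 1/2 by norm_num, Real.rpow_add Real.pi_pos, Real.rpow_one,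
      ← Real.sqrt_eq_rpow]
  have hee : Real.exp (t₂ ^ 2) * Real.exp (-t₂ ^ 2) = 1 := by
    rw [← Real.exp_add]; simp
  have h2 : Real.sqrt 2 ≠ 0 := by positivity
  have hπ : Real.sqrt Real.pi ≠ 0 := by positivity
  have hpi : Real.pi ≠ 0 := Real.pi_ne_zero
  simp_rw [hpt]
  rw [MeasureTheory.integral_const_mul, gauss_moment_Ioi t₁ t₂ ht₁pos, hK_def, Real.exp_add, hπ32]
  field_simp
  linear_combination (-16 * t₂) * hee
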